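/- If the fundamental tensor F satisfies the defining condition of class F₃, then the torsion tensor of the second natural connection is T²(x,y,z) = −(1/4) N(φ(φx), φ(φy), φ(φz)) for all x, y, z ∈ V, where N is the Nijenhuis tensor of F. -/
import Mathlib


open scoped RealInnerProductSpace

noncomputable section

variable {V : Type*} [NormedAddCommGroup V] [InnerProductSpace ℝ V]

/-- A Riemannian Π-structure on a real inner product space `V`:
a linear map `phi`, a vector `xi` (with dual form `η x = ⟪x, xi⟫`) satisfying
the defining algebraic identities. -/
structure PiStruct (V : Type*) [NormedAddCommGroup V] [InnerProductSpace ℝ V] where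
  phi : V →ₗ[ℝ] V
  xi : V
  phi_xi : phi xi = 0
  phi_phi : ∀ x : V, phi (phi x) = x - (⟪x, xi⟫ : ℝ) • xi
  eta_phi : ∀ x : V, ⟪phi x, xi⟫ = 0
  eta_xi : ⟪xi, xi⟫ = (1 : ℝ)
  g_phi_phi : ∀ x y : V, ⟪phi x, phi y⟫ = ⟪x, y⟫ - ⟪x, xi⟫ * ⟪y, xi⟫
  g_phi_symm : ∀ x y : V, ⟪phi x, y⟫ = ⟪x, phi y⟫

/-- Trilinear real-valued maps on `V`. -/
abbrev Tri (V : Type*) [NormedAddCommGroup V] [InnerProductSpace ℝ V] :=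
  V →ₗ[ℝ] V →ₗ[ℝ] V →ₗ[ℝ] ℝ

/-- The 1-form `η(x) = g(x, ξ)`. -/
def PiStruct.eta (P : PiStruct V) (x : V) : ℝ := ⟪x, P.xi⟫

/-- `F` is a fundamental tensor for the Π-structure `P`. -/
def IsFund (P : PiStruct V) (F : Tri V) : Prop :=
  (∀ x y z : V, F x y z = F x z y) ∧
  (∀ x y z : V, F x y z =
    -F x (P.phi y) (P.phi z) + P.eta y * F x P.xi z + P.eta z * F x y P.xi)

/-- The Nijenhuis tensor of `F`. -/
def Nij (P : PiStruct V) (F : Tri V) (x y z : V) : ℝ :=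
  F (P.phi x) y z - F (P.phi y) x z - F x y (P.phi z) + F y x (P.phi z)
    + P.eta z * (F x (P.phi y) P.xi - F y (P.phi x) P.xi)

/-- The potential of the first natural connection. -/
def Q1 (P : PiStruct V) (F : Tri V) (x y z : V) : ℝ :=
  -(1/2) * F x (P.phi y) z - (1/2) * P.eta z * F x (P.phi y) P.xi
    + P.eta y * F x (P.phi z) P.xi

/-- The potential of the second natural connection. -/
def Q2 (P : PiStruct V) (F : Tri V) (x y z : V) : ℝ :=
  Q1 P F x y z - (1/8) * (Nij P F (P.phi (P.phi z)) (P.phi (P.phi y)) (P.phi (P.phi x))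
    + 2 * P.eta x * Nij P F (P.phi z) (P.phi y) P.xi)

/-- The torsion tensor of the first natural connection. -/
def T1 (P : PiStruct V) (F : Tri V) (x y z : V) : ℝ :=
  -(1/2) * (F x (P.phi y) z - F y (P.phi x) z)
    - (1/2) * P.eta z * (F x (P.phi y) P.xi - F y (P.phi x) P.xi)
    + P.eta y * F x (P.phi z) P.xi - P.eta x * F y (P.phi z) P.xi

/-- The torsion tensor of the second natural connection. -/
def T2 (P : PiStruct V) (F : Tri V) (x y z : V) : ℝ :=
  Q2 P F x y z - Q2 P F y x z

/-- Identity (*) for a torsion-like tensor `T`. -/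
def StarId (P : PiStruct V) (T : V → V → V → ℝ) : Prop :=
  ∀ x y z : V,
    T x y z + T y z x + T (P.phi x) y (P.phi z) + T y (P.phi z) (P.phi x)
    - P.eta x * (T P.xi y z + T y z P.xi - P.eta y * T P.xi z P.xi)
    - P.eta y * (T x P.xi z + T P.xi z x + T (P.phi x) P.xi (P.phi z)
        + T P.xi (P.phi z) (P.phi x))
    - P.eta z * (T x y P.xi + T y P.xi x - P.eta y * T x P.xi P.xi) = 0

/-- The defining condition of the basic class F₃. -/
def ClassF3 (P : PiStruct V) (F : Tri V) : Prop :=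
  (∀ y z : V, F P.xi y z = 0) ∧ (∀ x z : V, F x P.xi z = 0) ∧
  (∀ x y z : V, F x y z + F y z x + F z x y = 0)

/-- in the class F₃ the torsion of the second natural connection is
`T²(x,y,z) = −(1/4) N(φ²x, φ²y, φ²z)`. -/
theorem classF3_T2_formula
    [FiniteDimensional ℝ V] (n : ℕ) (hn : 1 ≤ n)
    (hdim : Module.finrank ℝ V = 2 * n + 1)
    (P : PiStruct V) (F : Tri V) (hF : IsFund P F)
    (h3 : ClassF3 P F) :
    ∀ x y z : V, T2 P F x y z =
      -(1/4) * Nij P F (P.phi (P.phi x)) (P.phi (P.phi y)) (P.phi (P.phi z)) := by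
  obtain ⟨hsym, hfund⟩ := hF
  obtain ⟨hxi1, hxi2, hcyc⟩ := h3
  have hz3 : ∀ a b : V, F a b P.xi = 0 := fun a b => (hsym a b P.xi).trans (hxi2 a b)
  have heta2 : ∀ a : V, P.eta (P.phi a) = 0 := fun a => P.eta_phi a
  have hsq1 : ∀ a b c : V, F (P.phi (P.phi a)) b c = F a b c := by
    intro a b c; rw [P.phi_phi]; simp [map_sub, map_smul, hxi1]
  have hsq2 : ∀ a b c : V, F a (P.phi (P.phi b)) c = F a b c := by
    intro a b c; rw [P.phi_phi]; simp [map_sub, map_smul, hxi2]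
  have hsq3 : ∀ a b c : V, F a b (P.phi (P.phi c)) = F a b c := by
    intro a b c; rw [P.phi_phi]; simp [map_sub, map_smul, hz3]
  have hphi3 : ∀ a : V, P.phi (P.phi (P.phi a)) = P.phi a := by
    intro a; rw [P.phi_phi (P.phi a), P.eta_phi, zero_smul, sub_zero]
  have hPB : ∀ a b c : V, F a (P.phi b) c = - F a b (P.phi c) := by
    intro a b c
    have h := hfund a (P.phi b) c
    rw [hsq2, heta2, hz3] at h
    simpa using h
  have hNsq : ∀ a b c : V,
      Nij P F (P.phi (P.phi a)) (P.phi (P.phi b)) (P.phi (P.phi c)) =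
        F (P.phi a) b c - F (P.phi b) a c - F a b (P.phi c) + F b a (P.phi c) := by
    intro a b c
    unfold Nij
    rw [hphi3, hphi3, hphi3, heta2]
    rw [hsq2, hsq2, hsq1, hsq1, hsq2, hsq2, hsq3, hsq3]
    ring
  have hNxi : ∀ a b : V, Nij P F (P.phi a) (P.phi b) P.xi = 0 := by
    intro a b
    unfold Nij
    simp [P.phi_xi, hz3, PiStruct.eta]
  intro x y z
  have hT2 : T2 P F x y z =
      -(1/2) * F x (P.phi y) z + (1/2) * F y (P.phi x) z
      - (1/8) * (Nij P F (P.phi (P.phi z)) (P.phi (P.phi y)) (P.phi (P.phi x))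
        - Nij P F (P.phi (P.phi z)) (P.phi (P.phi x)) (P.phi (P.phi y))) := by
    unfold T2 Q2 Q1
    rw [hNxi, hNxi, hz3, hz3, hz3, hz3]
    ring
  rw [hT2, hNsq, hNsq, hNsq]
  -- collect the needed instances of the identities
  have h1 : F (P.phi z) y x = F (P.phi z) x y := hsym _ _ _
  have h2 : F z y (P.phi x) = F z (P.phi x) y := (hsym _ _ _).symm
  have h3a : F y z (P.phi x) = F y (P.phi x) z := (hsym _ _ _).symm
  have h4 : F z x (P.phi y) = F z (P.phi y) x := (hsym _ _ _).symm
  have h5 : F x z (P.phi y) = F x (P.phi y) z := (hsym _ _ _).symm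
  have h6 : F (P.phi y) z x = F (P.phi y) x z := hsym _ _ _
  have h7 : F (P.phi x) z y = F (P.phi x) y z := hsym _ _ _
  have h8 : F z (P.phi x) y = - F z x (P.phi y) := hPB _ _ _
  have h9 : F z (P.phi y) x = - F z y (P.phi x) := hPB _ _ _
  have h10 : F z x (P.phi y) + F x (P.phi y) z + F (P.phi y) z x = 0 := hcyc _ _ _
  have h11 : F z y (P.phi x) + F y (P.phi x) z + F (P.phi x) z y = 0 := hcyc _ _ _
  have h12a : F x y (P.phi z) = F x (P.phi z) y := (hsym _ _ _).symm
  have h12b : F x (P.phi z) y = - F x z (P.phi y) := hPB _ _ _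
  have h13a : F y x (P.phi z) = F y (P.phi z) x := (hsym _ _ _).symm
  have h13b : F y (P.phi z) x = - F y z (P.phi x) := hPB _ _ _
  linarith
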